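/- arXiv:math/0201291 — 2 statements merged into one kernel-verified Lean document; each statement's English description precedes it below -/
import Mathlib

section
/- Let p be a prime and d a positive integer with gcd(p-1, d) = 1. Suppose T is an automorphism of a finite abelian p-group A of the form A = ⊕_{i=1}^{m} Z/p^{k_i} with k_1 ≥ k_2 ≥ ... ≥ k_m ≥ 1, m ≥ 1, such that T^d = id and T - id is an automorphism of A (i.e. injective). Then m ≥ 2 and k_1 = k_2. -/
/-- Let `p` be a prime and `d` a positive integer with `gcd(p-1, d) = 1`. If `T` is an
automorphism of the finite abelian `p`-group `A = ⊕_{i<m} ℤ/p^{kᵢ}` (with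
`k₁ ≥ ... ≥ kₘ ≥ 1`, `m ≥ 1`) such that `T^d = id` and `T - id` is injective, then
`m ≥ 2` and `k₁ = k₂`. -/
theorem stmt_2 (p d m : ℕ) (hp : p.Prime) (hd : 0 < d)
    (hgcd : Nat.gcd (p - 1) d = 1) (hm : 1 ≤ m)
    (k : ℕ → ℕ) (hk1 : ∀ i, i < m → 1 ≤ k i)
    (hkmono : ∀ i j, i ≤ j → j < m → k j ≤ k i)
    (T : AddAut (DirectSum (Fin m) fun i => ZMod (p ^ k i.val)))
    (hT : d • T = 0)
    (hinj : Function.Injective fun x => T x - x) :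
    2 ≤ m ∧ k 0 = k 1 := by
  by_contra hcon
  haveI : Fact p.Prime := ⟨hp⟩
  set A := DirectSum (Fin m) fun i => ZMod (p ^ k i.val) with hA
  set i0 : Fin m := ⟨0, hm⟩ with hi0
  have hK1 : 1 ≤ k 0 := hk1 0 hm
  have hplt : 1 < p := hp.one_lt
  set K := k 0 with hKdef
  -- component projections
  set π : ∀ i : Fin m, A →+ ZMod (p ^ k i.val) :=
    fun i => DFinsupp.evalAddMonoidHom (β := fun i : Fin m => ZMod (p ^ k i.val)) i with hπ
  have hπ_apply : ∀ (i : Fin m) (x : A), π i x = x i := fun _ _ => rfl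
  have hns : ∀ (n : ℕ) (x : A) (i : Fin m), (n • x) i = n • (x i) :=
    fun n x i => map_nsmul (π i) n x
  have hzs : ∀ (n : ℤ) (x : A) (i : Fin m), (n • x) i = n • (x i) :=
    fun n x i => map_zsmul (π i) n x
  have hzap : ∀ i : Fin m, (0 : A) i = 0 := fun i => rfl
  -- every other component is strictly smaller
  have hsmall : ∀ i : Fin m, i ≠ i0 → k i.val < K := by
    intro i hi
    have hiv : 1 ≤ i.val := by
      rcases Nat.eq_zero_or_pos i.val with h | h
      · exact absurd (Fin.ext h) hi
      · exact h
    have hm2 : 2 ≤ m := lt_of_le_of_lt hiv i.isLt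
    have hne : k 0 ≠ k 1 := fun h => hcon ⟨hm2, h⟩
    have h1 : k 1 ≤ k 0 := hkmono 0 1 (by norm_num) hm2
    have h2 : k i.val ≤ k 1 := hkmono 1 i.val hiv i.isLt
    omega
  -- the distinguished element
  set ε : ZMod (p ^ K) := ((p ^ (K - 1) : ℕ) : ZMod (p ^ K)) with hε
  set e : A := DirectSum.of (fun i : Fin m => ZMod (p ^ k i.val)) i0 ε with he
  have hε_ne : ε ≠ 0 := by
    rw [hε, Ne, ZMod.natCast_eq_zero_iff]
    intro hdvd
    have := (Nat.pow_dvd_pow_iff_le_right hplt).mp hdvd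
    omega
  have he_ne : e ≠ 0 := by
    intro h
    apply hε_ne
    have h0 : e i0 = 0 := by rw [h]; rfl
    rwa [he, DirectSum.of_eq_same] at h0
  -- p • e = 0
  have hppow : p ^ (K - 1) * p = p ^ K := by
    rw [← pow_succ]; congr 1; omega
  have hpe : p • e = 0 := by
    rw [he, ← map_nsmul]
    have : p • ε = 0 := by
      rw [hε, ← Nat.cast_smul_eq_nsmul (ZMod (p ^ K)), smul_eq_mul, ← Nat.cast_mul,
        mul_comm, hppow, ZMod.natCast_self]
    rw [this, map_zero]
  -- torsion: multiples of p kill e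
  have hkill : ∀ n : ℤ, (p : ℤ) ∣ n → n • e = 0 := by
    intro n ⟨t, ht⟩
    rw [ht, mul_comm, mul_smul]
    have : (p : ℤ) • e = 0 := by rw [natCast_zsmul, hpe]
    rw [this, smul_zero]
  have hcastK : ((p ^ K : ℕ) : ℤ) = (p : ℤ) ^ (K - 1) * (p : ℤ) := by
    rw [← hppow]; push_cast; ring
  -- conversely
  have hkill' : ∀ n : ℤ, n • e = 0 → (p : ℤ) ∣ n := by
    intro n hn
    have h1 : n • ε = 0 := by
      have h := congrArg (fun x : A => x i0) hn
      simp only [hzs, hzap] at h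
      rwa [he, DirectSum.of_eq_same] at h
    rw [hε, zsmul_eq_mul] at h1
    have h1' : ((n * (p : ℤ) ^ (K - 1) : ℤ) : ZMod (p ^ K)) = 0 := by
      push_cast
      push_cast at h1
      exact h1
    have h2 := (ZMod.intCast_zmod_eq_zero_iff_dvd _ _).mp h1'
    rw [hcastK] at h2
    have hne : ((p : ℤ) ^ (K - 1)) ≠ 0 := pow_ne_zero _ (by exact_mod_cast hp.pos.ne')
    rw [mul_comm ((p:ℤ) ^ (K - 1)) (p : ℤ)] at h2
    rw [mul_comm n ((p:ℤ) ^ (K - 1)), mul_comm ((p:ℤ)) ((p:ℤ) ^ (K - 1))] at h2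
    exact (mul_dvd_mul_iff_left hne).mp h2
  -- T e = c • e for some natural c
  have hTe : ∃ c : ℕ, T e = c • e := by
    set e1 : A := DirectSum.of (fun i : Fin m => ZMod (p ^ k i.val)) i0 (1 : ZMod (p ^ K)) with he1
    have heq : e = p ^ (K - 1) • e1 := by
      rw [he1, ← map_nsmul, he, hε]
      congr 1
      rw [← Nat.cast_smul_eq_nsmul (ZMod (p ^ K)), smul_eq_mul, mul_one]
    have hvanish : ∀ i : Fin m, i ≠ i0 → (T e) i = 0 := by
      intro i hi
      have h3 : (T e) i = p ^ (K - 1) • ((T e1) i) := by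
        rw [heq, map_nsmul, ← hπ_apply, ← hπ_apply, map_nsmul]
      rw [h3, ← Nat.cast_smul_eq_nsmul (ZMod (p ^ k i.val)), smul_eq_mul]
      have h4 : ((p ^ (K - 1) : ℕ) : ZMod (p ^ k i.val)) = 0 := by
        rw [ZMod.natCast_eq_zero_iff]
        exact pow_dvd_pow p (by have := hsmall i hi; omega)
      rw [h4, zero_mul]
    -- the i0 component is killed by p
    set z : ZMod (p ^ K) := (T e) i0 with hz
    have hpz : p • z = 0 := by
      have h0 : p • T e = 0 := by rw [← map_nsmul, hpe, map_zero]
      have h := congrArg (fun x : A => x i0) h0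
      simp only [hns, hzap] at h
      exact h
    have hzval : ((z.val : ℕ) : ZMod (p ^ K)) = z := by
      rw [ZMod.natCast_val, ZMod.cast_id]
    -- so z is a multiple of ε
    have hdvd : p ^ (K - 1) ∣ z.val := by
      have h1 : ((p * z.val : ℕ) : ZMod (p ^ K)) = 0 := by
        push_cast
        rw [hzval]  -- might not fire; fallback below
        rw [← Nat.cast_smul_eq_nsmul (ZMod (p ^ K)), smul_eq_mul] at hpz
        exact hpz
      rw [ZMod.natCast_eq_zero_iff] at h1
      obtain ⟨t, ht⟩ := h1
      refine ⟨t, ?_⟩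
      have h5 : p * z.val = p * (p ^ (K - 1) * t) := by
        rw [ht, ← hppow]; ring
      exact Nat.eq_of_mul_eq_mul_left hp.pos h5
    obtain ⟨c, hc⟩ := hdvd
    refine ⟨c, ?_⟩
    have hzc : z = c • ε := by
      rw [← hzval, hc, hε, ← Nat.cast_smul_eq_nsmul (ZMod (p ^ K)), smul_eq_mul,
        ← Nat.cast_mul, mul_comm]
    apply DFinsupp.ext
    intro i
    show (T e) i = (c • e) i
    rw [hns]
    by_cases hi : i = i0
    · rw [hi]
      have he_comp : e i0 = ε := by rw [he]; exact DirectSum.of_eq_same _ _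
      rw [he_comp, ← hz, hzc]
    · have he_comp : e i = 0 := by
        rw [he]; exact DirectSum.of_eq_of_ne _ _ _ (fun h => hi h)
      rw [hvanish i hi, he_comp, smul_zero]
  obtain ⟨c, hc⟩ := hTe
  -- iterate
  have hTn : ∀ n : ℕ, (n • T) e = c ^ n • e := by
    intro n
    induction n with
    | zero => simp
    | succ n ih =>
      rw [succ_nsmul', AddAut.add_apply, ih, map_nsmul, hc, smul_smul, ← pow_succ]
  have hcd : c ^ d • e = e := by rw [← hTn, hT]; rfl
  -- hence p ∣ c^d - 1 over ℤ
  have hdvd1 : (p : ℤ) ∣ (c : ℤ) ^ d - 1 := by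
    apply hkill'
    rw [sub_smul, one_smul, sub_eq_zero, ← Nat.cast_pow, natCast_zsmul, hcd]
  -- work in ZMod p
  have hcp : ((c : ZMod p)) ^ d = 1 := by
    have h7 : (((c : ℤ) ^ d - 1 : ℤ) : ZMod p) = 0 :=
      (ZMod.intCast_zmod_eq_zero_iff_dvd _ p).mpr hdvd1
    push_cast at h7
    linear_combination h7
  have hcp1 : (c : ZMod p) = 1 := by
    have hcne : (c : ZMod p) ≠ 0 := by
      intro h
      rw [h, zero_pow hd.ne'] at hcp
      exact zero_ne_one hcp
    obtain ⟨u, hu⟩ := hcne.isUnit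
    have hud : u ^ d = 1 := by
      ext
      push_cast
      rw [hu, hcp]
    have h1 : orderOf u ∣ d := orderOf_dvd_of_pow_eq_one hud
    have h2 : orderOf u ∣ p - 1 := by
      have := orderOf_dvd_card (x := u)
      rwa [ZMod.card_units] at this
    have h3 : orderOf u ∣ 1 := hgcd ▸ Nat.dvd_gcd h2 h1
    have hu1 : u = 1 := orderOf_eq_one_iff.mp (Nat.dvd_one.mp h3)
    rw [← hu, hu1, Units.val_one]
  -- conclude T e = e
  have hfix : T e - e = 0 := by
    have hdvd2 : (p : ℤ) ∣ (c : ℤ) - 1 := by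
      rw [← ZMod.intCast_zmod_eq_zero_iff_dvd]
      push_cast
      rw [hcp1, sub_self]
    have h8 : ((c : ℤ) - 1) • e = 0 := hkill _ hdvd2
    rw [sub_smul, one_smul, natCast_zsmul, sub_eq_zero] at h8
    rw [hc, h8, sub_self]
  have h9 : e = 0 := by
    apply hinj
    show T e - e = T 0 - 0
    rw [hfix, map_zero, sub_zero]
  exact he_ne h9
end

section
/- Let p be a prime and d a positive integer with gcd((p-1)p(p+1), d) = 1. Suppose T is an automorphism of a finite abelian p-group A = ⊕_{i=1}^{m} Z/p^{k_i} with k_1 ≥ ... ≥ k_m ≥ 1, m ≥ 1, such that T^d = id and T - id is bijective on A. Then m ≥ 3 and k_1 = k_2 = k_3. -/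
-- fixed points of zpowers
private lemma fix_zpow {G : Type*} [Group G] {α : Type*} [MulAction G α] (g : G) (x : α)
    (h : g • x = x) (kk : ℤ) : g ^ kk • x = x := by
  induction kk using Int.induction_on with
  | zero => simp
  | succ n ih => rw [zpow_add_one, mul_smul, h, ih]
  | pred n ih =>
    have h' : g⁻¹ • x = x := inv_smul_eq_iff.mpr h.symm
    rw [zpow_sub_one, mul_smul, h', ih]

private lemma card_eq_pow (p : ℕ) (hp : p.Prime) (B : Type*) [AddCommGroup B] [Finite B]
    (htor : ∀ x : B, p • x = 0) : ∃ r, Nat.card B = p ^ r := by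
  have := Fintype.ofFinite B
  refine ⟨_, Nat.eq_prime_pow_of_unique_prime_dvd (Nat.card_pos.ne') ?_⟩
  intro q hq hdvd
  haveI : Fact q.Prime := ⟨hq⟩
  rw [Nat.card_eq_fintype_card] at hdvd
  obtain ⟨x, hx⟩ := exists_prime_addOrderOf_dvd_card q hdvd
  have : addOrderOf x ∣ p := addOrderOf_dvd_of_nsmul_eq_zero (htor x)
  rw [hx] at this
  exact (Nat.prime_dvd_prime_iff_eq hq hp).mp this

private lemma key (p d : ℕ) (hp : p.Prime) (hd : 0 < d)
    (hgcd : Nat.gcd ((p - 1) * p * (p + 1)) d = 1)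
    (B : Type*) [AddCommGroup B] [Finite B]
    (hcard : Nat.card B ≤ p ^ 2)
    (htor : ∀ x : B, p • x = 0)
    (S : Multiplicative (AddAut B)) (hS : S ^ d = 1) (hS1 : S ≠ 1) : False := by
  obtain ⟨r, hr⟩ := card_eq_pow p hp B htor
  have hr2 : r ≤ 2 := by
    rw [hr] at hcard
    exact (Nat.pow_le_pow_iff_right hp.one_lt).mp hcard
  have hfin : IsOfFinOrder S := isOfFinOrder_iff_pow_eq_one.2 ⟨d, hd, hS⟩
  set t := orderOf S with htdef
  have htd : t ∣ d := orderOf_dvd_of_pow_eq_one hS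
  have ht1 : t ≠ 1 := fun h => hS1 (orderOf_eq_one_iff.mp h)
  have ht0 : 0 < t := hfin.orderOf_pos
  set q := t.minFac with hqdef
  have hq : q.Prime := Nat.minFac_prime ht1
  have hqt : q ∣ t := Nat.minFac_dvd t
  have hqd : q ∣ d := hqt.trans htd
  have hqp : q ≠ p := by
    rintro rfl
    have hpd : q ∣ Nat.gcd ((q - 1) * q * (q + 1)) d :=
      Nat.dvd_gcd ⟨(q - 1) * (q + 1), by ring⟩ hqd
    rw [hgcd] at hpd
    exact hq.one_lt.ne' (Nat.dvd_one.mp hpd)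
  set g := S ^ (t / q) with hgdef
  have horder : orderOf g = q := by
    rw [hgdef, hfin.orderOf_pow, ← htdef, Nat.gcd_eq_right (Nat.div_dvd_of_dvd hqt),
      Nat.div_div_self hqt ht0.ne']
  have hg1 : g ≠ 1 := by
    intro h
    rw [h, orderOf_one] at horder
    exact hq.one_lt.ne horder
  haveI : Fact q.Prime := ⟨hq⟩
  have hpg : IsPGroup q (Subgroup.zpowers g) :=
    IsPGroup.of_card (n := 1) (by rw [Nat.card_zpowers, horder, pow_one])
  have hmod := hpg.card_modEq_card_fixedPoints B
  let F : AddSubgroup B :=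
  { carrier := MulAction.fixedPoints (Subgroup.zpowers g) B
    zero_mem' := fun h => map_zero (Multiplicative.toAdd (h : Multiplicative (AddAut B)))
    add_mem' := fun {a b} ha hb h => by
      change Multiplicative.toAdd (h : Multiplicative (AddAut B)) (a + b) = a + b
      rw [map_add]; exact congrArg₂ (· + ·) (ha h) (hb h)
    neg_mem' := fun {a} ha h => by
      change Multiplicative.toAdd (h : Multiplicative (AddAut B)) (-a) = -a
      rw [map_neg]; exact congrArg Neg.neg (ha h) }
  have hFcard : Nat.card F = Nat.card (MulAction.fixedPoints (Subgroup.zpowers g) B) := rfl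
  obtain ⟨s, hs⟩ := card_eq_pow p hp F (fun x => by
    have := htor (x : B)
    ext
    push_cast
    simpa using this)
  have hsr : p ^ s ∣ p ^ r := by
    rw [← hr, ← hs]; exact AddSubgroup.card_addSubgroup_dvd_card F
  have hs_le : s ≤ r := (Nat.pow_dvd_pow_iff_le_right hp.one_lt).mp hsr
  have hs_ne : s ≠ r := by
    intro h
    have hFtop : F = ⊤ := AddSubgroup.eq_top_of_card_eq F (by rw [hs, hr, h])
    apply hg1
    apply Multiplicative.toAdd.injective
    ext x
    have hx : x ∈ F := hFtop ▸ AddSubgroup.mem_top x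
    exact hx ⟨g, Subgroup.mem_zpowers g⟩
  rw [hr, ← hFcard, hs] at hmod
  have hdvdZ : (q : ℤ) ∣ (p : ℤ) ^ s * ((p : ℤ) ^ (r - s) - 1) := by
    have hd2 := (hmod.symm).dvd
    have hps : (p : ℤ) ^ s * ((p : ℤ) ^ (r - s) - 1) = ((p ^ r : ℕ) : ℤ) - ((p ^ s : ℕ) : ℤ) := by
      have hpr : (p : ℤ) ^ r = (p : ℤ) ^ s * (p : ℤ) ^ (r - s) := by
        rw [← pow_add, Nat.add_sub_cancel' hs_le]
      push_cast
      rw [hpr]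
      ring
    rw [hps]
    exact hd2
  have hqZ : Prime (q : ℤ) := Nat.prime_iff_prime_int.mp hq
  have hnd : ¬ (q : ℤ) ∣ (p : ℤ) ^ s := by
    intro h
    have : q ∣ p ^ s := by exact_mod_cast h
    exact hqp ((Nat.prime_dvd_prime_iff_eq hq hp).mp (hq.dvd_of_dvd_pow this))
  have hq2 : (q : ℤ) ∣ (p : ℤ) ^ (r - s) - 1 := (hqZ.dvd_mul.mp hdvdZ).resolve_left hnd
  have h1le : 1 ≤ p ^ (r - s) := Nat.one_le_pow _ _ hp.pos
  have hqnat : q ∣ p ^ (r - s) - 1 := by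
    have hcast : ((p ^ (r - s) - 1 : ℕ) : ℤ) = (p : ℤ) ^ (r - s) - 1 := by
      push_cast [h1le]
      ring
    rw [← Int.natCast_dvd_natCast, hcast]
    exact hq2
  have hrs : r - s = 1 ∨ r - s = 2 := by omega
  have hqprod : q ∣ (p - 1) * p * (p + 1) := by
    rcases hrs with h | h
    · rw [h, pow_one] at hqnat
      exact dvd_mul_of_dvd_left (dvd_mul_of_dvd_left hqnat p) (p + 1)
    · have hsq : p ^ 2 - 1 = (p + 1) * (p - 1) := by simpa using Nat.sq_sub_sq p 1
      rw [h, hsq] at hqnat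
      exact hqnat.trans ⟨p, by ring⟩
  have hfinal : q ∣ 1 := hgcd ▸ Nat.dvd_gcd hqprod hqd
  exact hq.one_lt.ne' (Nat.dvd_one.mp hfinal)

private lemma tor_bound (p kk : ℕ) (hp : p.Prime) (z : ZMod (p ^ kk)) :
    z.val / p ^ (kk - 1) < p := by
  haveI : NeZero (p ^ kk) := ⟨pow_ne_zero _ hp.pos.ne'⟩
  rcases Nat.eq_zero_or_pos kk with h | h
  · subst h
    have hv : z.val = 0 := by
      have h0 := ZMod.val_lt z
      have h1 : p ^ 0 = 1 := pow_zero p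
      omega
    rw [hv, Nat.zero_div]
    exact hp.pos
  · rw [Nat.div_lt_iff_lt_mul (Nat.pow_pos hp.pos)]
    have hv := ZMod.val_lt z
    calc z.val < p ^ kk := hv
    _ = p * p ^ (kk - 1) := by rw [← pow_succ']; congr 1; omega

private lemma tor_div (p kk : ℕ) (hp : p.Prime) (hk : 1 ≤ kk) (z w : ZMod (p ^ kk))
    (hz : p • z = 0) (hw : p • w = 0)
    (h : z.val / p ^ (kk - 1) = w.val / p ^ (kk - 1)) : z = w := by
  haveI : NeZero (p ^ kk) := ⟨pow_ne_zero _ hp.pos.ne'⟩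
  have key : ∀ u : ZMod (p ^ kk), p • u = 0 → p ^ (kk - 1) ∣ u.val := by
    intro u hu
    have h1 : ((p * u.val : ℕ) : ZMod (p ^ kk)) = 0 := by
      rw [Nat.cast_mul, ZMod.natCast_val, ZMod.cast_id, ← nsmul_eq_mul]
      exact hu
    have h2 : p ^ kk ∣ p * u.val := (ZMod.natCast_eq_zero_iff _ _).mp h1
    have h3 : p * p ^ (kk - 1) ∣ p * u.val := by
      rw [← pow_succ']
      have : kk - 1 + 1 = kk := by omega
      rw [this]
      exact h2
    exact (Nat.mul_dvd_mul_iff_left hp.pos).mp h3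
  have hz' := key z hz
  have hw' := key w hw
  apply ZMod.val_injective
  have e1 : z.val = p ^ (kk - 1) * (z.val / p ^ (kk - 1)) := by
    rw [Nat.mul_div_cancel' hz']
  have e2 : w.val = p ^ (kk - 1) * (w.val / p ^ (kk - 1)) := by
    rw [Nat.mul_div_cancel' hw']
  rw [e1, e2, h]

private lemma nsmul_apply {ι : Type*} [DecidableEq ι] {β : ι → Type*}
    [∀ i, AddCommMonoid (β i)] (c : ℕ) (x : DirectSum ι β) (i : ι) :
    (c • x) i = c • (x i) := by
  induction c with
  | zero => simp
  | succ n ih => rw [succ_nsmul, succ_nsmul, DirectSum.add_apply, ih]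


/-- Let `p` be a prime and `d` a positive integer with `gcd((p-1)p(p+1), d) = 1`. If `T`
is an automorphism of the finite abelian `p`-group `A = ⊕_{i<m} ℤ/p^{kᵢ}` (with
`k₁ ≥ ... ≥ kₘ ≥ 1`, `m ≥ 1`) such that `T^d = id` and `T - id` is bijective, then
`m ≥ 3` and `k₁ = k₂ = k₃`. -/
theorem stmt_3 (p d m : ℕ) (hp : p.Prime) (hd : 0 < d)
    (hgcd : Nat.gcd ((p - 1) * p * (p + 1)) d = 1) (hm : 1 ≤ m)
    (k : ℕ → ℕ) (hk1 : ∀ i, i < m → 1 ≤ k i)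
    (hkmono : ∀ i j, i ≤ j → j < m → k j ≤ k i)
    (T : AddAut (DirectSum (Fin m) fun i => ZMod (p ^ k i.val)))
    (hT : d • T = 0)
    (hbij : Function.Bijective fun x => T x - x) :
    3 ≤ m ∧ k 0 = k 1 ∧ k 1 = k 2 := by
  set A := DirectSum (Fin m) fun i => ZMod (p ^ k i.val) with hA
  have happ : ∀ n : ℕ, n < k 0 → (∀ i : Fin m, 2 ≤ (i : ℕ) → k i.val ≤ n) → False := by
    intro n hn h2
    set i0 : Fin m := ⟨0, hm⟩ with hi0
    have hk0 : 1 ≤ k 0 := hk1 0 hm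
    let Bs : AddSubgroup A :=
      { carrier := {x | p • x = 0 ∧ ∃ y, x = p ^ n • y}
        zero_mem' := ⟨smul_zero _, 0, (smul_zero _).symm⟩
        add_mem' := by
          rintro a b ⟨ha1, ya, rfl⟩ ⟨hb1, yb, rfl⟩
          exact ⟨by rw [smul_add, ha1, hb1, add_zero], ya + yb, by rw [smul_add]⟩
        neg_mem' := by
          rintro a ⟨ha1, ya, rfl⟩
          exact ⟨by rw [smul_neg, ha1, neg_zero], -ya, by rw [smul_neg]⟩ }
    have hmem : ∀ x : A, x ∈ Bs ↔ p • x = 0 ∧ ∃ y, x = p ^ n • y := fun x => Iff.rfl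
    -- components at indices ≥ 2 vanish
    have hcomp0 : ∀ x : A, x ∈ Bs → ∀ i : Fin m, 2 ≤ (i : ℕ) → x i = 0 := by
      rintro x ⟨-, y, rfl⟩ i hi
      rw [nsmul_apply]
      obtain ⟨c, hc⟩ : p ^ k i.val ∣ p ^ n := pow_dvd_pow p (h2 i hi)
      rw [hc, mul_smul, nsmul_eq_mul, ZMod.natCast_self, zero_mul]
    have htorB : ∀ x : A, x ∈ Bs → ∀ i : Fin m, p • (x i) = 0 := by
      rintro x ⟨h1, -⟩ i
      rw [← nsmul_apply, h1, DirectSum.zero_apply]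
    -- T-invariance
    have hTB : ∀ x ∈ Bs, T x ∈ Bs := by
      rintro x ⟨h1, y, rfl⟩
      refine ⟨?_, T y, map_nsmul T _ _⟩
      rw [← map_nsmul, h1, map_zero]
    have hTB' : ∀ x ∈ Bs, T.symm x ∈ Bs := by
      rintro x ⟨h1, y, rfl⟩
      refine ⟨?_, T.symm y, map_nsmul T.symm _ _⟩
      rw [← map_nsmul, h1, map_zero]
    -- injection into Fin p × Fin p
    let φ : ↥Bs → Fin p × Fin p := fun x =>
      ⟨⟨((x : A) i0).val / p ^ (k 0 - 1), tor_bound p (k 0) hp _⟩,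
       if h : 1 < m then ⟨((x : A) ⟨1, h⟩).val / p ^ (k 1 - 1), tor_bound p (k 1) hp _⟩
       else ⟨0, hp.pos⟩⟩
    have hφinj : Function.Injective φ := by
      rintro ⟨x, hx⟩ ⟨y, hy⟩ hxy
      have h1 := congrArg Prod.fst hxy
      have h2' := congrArg Prod.snd hxy
      simp only [φ] at h1 h2'
      apply Subtype.ext
      refine DFinsupp.ext fun i => ?_
      rcases Nat.lt_or_ge (i : ℕ) 2 with hi | hi
      · rcases Nat.lt_or_ge (i : ℕ) 1 with hi1 | hi1
        · have hieq : i = i0 := by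
            apply Fin.ext
            have hv : (i0 : ℕ) = 0 := rfl
            omega
          subst hieq
          exact tor_div p (k 0) hp hk0 _ _ (htorB x hx i0) (htorB y hy i0)
            (by simpa using congrArg Fin.val h1)
        · have hlt : 1 < m := lt_of_le_of_lt hi1 i.2
          have hieq : i = ⟨1, hlt⟩ := by
            apply Fin.ext
            have hv : ((⟨1, hlt⟩ : Fin m) : ℕ) = 1 := rfl
            omega
          subst hieq
          simp only [dif_pos hlt] at h2'
          exact tor_div p (k 1) hp (hk1 1 hlt) _ _ (htorB x hx _) (htorB y hy _)
            (by simpa using congrArg Fin.val h2')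
      · rw [hcomp0 x hx i hi, hcomp0 y hy i hi]
    haveI : Finite ↥Bs := Finite.of_injective φ hφinj
    have hcard : Nat.card ↥Bs ≤ p ^ 2 := by
      have h := Nat.card_le_card_of_injective φ hφinj
      have h2'' : Nat.card (Fin p × Fin p) = p ^ 2 := by
        simp [Nat.card_eq_fintype_card, sq]
      exact le_trans h h2''.le
    -- nonzero element of Bs
    let z0 : ZMod (p ^ k 0) := ((p ^ (k 0 - 1) : ℕ) : ZMod (p ^ k 0))
    let x₀ : A := DirectSum.of _ i0 z0
    have hx₀B : x₀ ∈ Bs := by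
      constructor
      · rw [← map_nsmul]
        have hz : p • z0 = 0 := by
          rw [nsmul_eq_mul]
          have : (p : ZMod (p ^ k 0)) * ((p ^ (k 0 - 1) : ℕ) : ZMod (p ^ k 0))
              = ((p ^ k 0 : ℕ) : ZMod (p ^ k 0)) := by
            push_cast
            rw [← pow_succ']
            congr 1
            omega
          rw [this, ZMod.natCast_self]
        rw [hz, map_zero]
      · refine ⟨DirectSum.of _ i0 ((p ^ (k 0 - 1 - n) : ℕ) : ZMod (p ^ k 0)), ?_⟩
        rw [← map_nsmul]
        have harg : ((p ^ (k 0 - 1) : ℕ) : ZMod (p ^ k 0))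
            = p ^ n • ((p ^ (k 0 - 1 - n) : ℕ) : ZMod (p ^ k 0)) := by
          rw [nsmul_eq_mul]
          push_cast
          rw [← pow_add]
          congr 1
          omega
        exact congrArg (DirectSum.of (fun i : Fin m => ZMod (p ^ k i.val)) i0) harg
    have hx₀0 : x₀ ≠ 0 := by
      intro h
      have hc := congrArg (fun u : A => u i0) h
      simp only [DirectSum.of_eq_same, DirectSum.zero_apply] at hc
      have hnd : ¬ (p ^ k 0 ∣ p ^ (k 0 - 1)) := by
        rw [Nat.pow_dvd_pow_iff_le_right hp.one_lt]
        omega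
      exact hnd ((ZMod.natCast_eq_zero_iff _ _).mp hc)
    -- restricted automorphism
    let S : AddAut ↥Bs :=
      { toFun := fun x => ⟨T x, hTB x x.2⟩
        invFun := fun x => ⟨T.symm x, hTB' x x.2⟩
        left_inv := fun x => Subtype.ext (T.symm_apply_apply (x : A))
        right_inv := fun x => Subtype.ext (T.apply_symm_apply (x : A))
        map_add' := fun x y => Subtype.ext (map_add T (x : A) (y : A)) }
    have hSpow : ∀ (c : ℕ) (x : ↥Bs), (((c • S) x : A)) = (c • T) (x : A) := by
      intro c
      induction c with
      | zero => intro x; rw [zero_nsmul, zero_nsmul]; rfl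
      | succ cc ih =>
        intro x
        rw [succ_nsmul, succ_nsmul, AddAut.add_apply, AddAut.add_apply, ih]
        rfl
    have hSd : d • S = 0 := by
      ext x
      rw [hSpow d x, hT]
      rfl
    have hSne : S ≠ 0 := by
      intro h
      have h0 : T x₀ = x₀ := by
        have hc := congrArg (fun u : AddAut ↥Bs => ((u ⟨x₀, hx₀B⟩ : ↥Bs) : A)) h
        exact hc
      apply hx₀0
      have : (fun x => T x - x) x₀ = (fun x => T x - x) 0 := by
        simp [h0]
      exact hbij.1 this
    exact key p d hp hd hgcd ↥Bs hcard
      (fun x => Subtype.ext (by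
        have h2 := x.2.1
        have hco : ((p • x : ↥Bs) : A) = p • (x : A) := rfl
        rw [hco, h2]
        rfl)) (Multiplicative.ofAdd S) (by rw [← ofAdd_nsmul, hSd]; rfl) (fun h => hSne h)
  have h3 : 3 ≤ m := by
    by_contra h
    exact happ 0 (hk1 0 hm) (fun i hi => absurd i.2 (by omega))
  refine ⟨h3, ?_, ?_⟩
  · by_contra hne
    have hlt : k 1 < k 0 :=
      (hkmono 0 1 (by omega) (by omega)).lt_of_ne (fun h => hne h.symm)
    exact happ (k 1) hlt (fun i hi => hkmono 1 (i : ℕ) (by omega) i.2)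
  · by_contra hne
    have hlt : k 2 < k 1 :=
      (hkmono 1 2 (by omega) (by omega)).lt_of_ne (fun h => hne h.symm)
    exact happ (k 2) (lt_of_lt_of_le hlt (hkmono 0 1 (by omega) (by omega)))
      (fun i hi => hkmono 2 (i : ℕ) hi i.2)
end
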